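/- Let r ≥ 1 be an integer, t ∈ ℂ with t ≠ 0, and set m = 2r and ℏ = 1/|t|. For every Schwartz function ψ : ℝ^{2r} → ℂ and every 1 ≤ j ≤ r, one has B(D_j ψ)(z) = (i/2)·( μ_j + δ_j )(B(ψ))(z) for all z ∈ ℂ^{2r}, where D_j ψ := (1/|t|)( ∂ψ/∂q_j + i ∂ψ/∂q_{j+r} ), μ_j f := (z_j + i z_{j+r}) f and δ_j f := (2/|t|)( ∂f/∂z_j + i ∂f/∂z_{j+r} ). -/

import Mathlib

set_option maxHeartbeats 1000000

open Complex MeasureTheory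

noncomputable section

/-- The Bargmann kernel `exp(−(1/(4ℏ))(4i q·z + 2|q|² − z·z))`. -/
def bKer (m : ℕ) (h : ℝ) (q : Fin m → ℝ) (z : Fin m → ℂ) : ℂ :=
  Complex.exp (-(1 / (4 * (h : ℂ))) *
    (4 * Complex.I * (∑ j, (q j : ℂ) * z j) + 2 * (∑ j, ((q j : ℂ))^2) - ∑ j, (z j)^2))

/-- The Bargmann transform `B(ψ)(z) = (πℏ)^{-m/4} ∫ ψ(q) exp(−(1/(4ℏ))(4i q·z + 2|q|² − z·z)) dq`. -/
def barg (m : ℕ) (h : ℝ) (ψ : (Fin m → ℝ) → ℂ) (z : Fin m → ℂ) : ℂ :=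
  (((Real.pi * h) ^ (-(m : ℝ) / 4) : ℝ) : ℂ) * ∫ q : Fin m → ℝ, ψ q * bKer m h q z

/-- The complex partial derivative `∂_{z_j} f` at `z`. -/
def cpder {m : ℕ} (j : Fin m) (f : (Fin m → ℂ) → ℂ) (z : Fin m → ℂ) : ℂ :=
  deriv (fun w : ℂ => f (Function.update z j w)) (z j)

/-- The operator `M_j ψ = (q_j + i q_{j+r}) ψ` on functions on `ℝ^{2r}`. -/
def Mop (r : ℕ) (j : Fin r) (ψ : (Fin (r+r) → ℝ) → ℂ) : (Fin (r+r) → ℝ) → ℂ :=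
  fun q => ((q (Fin.castAdd r j) : ℂ) + Complex.I * (q (Fin.natAdd r j) : ℂ)) * ψ q

/-- The operator `D_j ψ = (1/|t|)(∂ψ/∂q_j + i ∂ψ/∂q_{j+r})` on functions on `ℝ^{2r}`. -/
def Dop (r : ℕ) (t : ℂ) (j : Fin r) (ψ : (Fin (r+r) → ℝ) → ℂ) : (Fin (r+r) → ℝ) → ℂ :=
  fun q => (1 / (‖t‖ : ℂ)) *
    (fderiv ℝ ψ q (Pi.single (Fin.castAdd r j) 1)
      + Complex.I * fderiv ℝ ψ q (Pi.single (Fin.natAdd r j) 1))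

/-- The operator `μ_j f = (z_j + i z_{j+r}) f` on functions on `ℂ^{2r}`. -/
def muop (r : ℕ) (j : Fin r) (f : (Fin (r+r) → ℂ) → ℂ) : (Fin (r+r) → ℂ) → ℂ :=
  fun z => (z (Fin.castAdd r j) + Complex.I * z (Fin.natAdd r j)) * f z

/-- The operator `δ_j f = (2/|t|)(∂f/∂z_j + i ∂f/∂z_{j+r})` on functions on `ℂ^{2r}`. -/
def deltaop (r : ℕ) (t : ℂ) (j : Fin r) (f : (Fin (r+r) → ℂ) → ℂ) : (Fin (r+r) → ℂ) → ℂ :=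
  fun z => (2 / (‖t‖ : ℂ)) *
    (cpder (Fin.castAdd r j) f z + Complex.I * cpder (Fin.natAdd r j) f z)

/-! ### Auxiliary lemmas -/

open Finset

/-- one-variable factor of the Bargmann kernel -/
def eK (h : ℝ) (a : ℝ) (w : ℂ) : ℂ :=
  Complex.exp (-(1 / (4 * (h : ℂ))) * (4 * Complex.I * ((a:ℂ) * w) + 2 * (a:ℂ)^2 - w^2))

lemma bKer_prod (m : ℕ) (h : ℝ) (q : Fin m → ℝ) (z : Fin m → ℂ) :
    bKer m h q z = ∏ j, eK h (q j) (z j) := by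
  unfold bKer eK
  rw [← Complex.exp_sum]
  congr 1
  simp only [mul_sub, mul_add, Finset.mul_sum, Finset.sum_add_distrib, Finset.sum_sub_distrib,
    neg_mul, Finset.sum_neg_distrib, neg_add, neg_sub]

lemma norm_eK (h : ℝ) (a : ℝ) (w : ℂ) :
    ‖eK h a w‖ = Real.exp (-(1/(2*h)) * a^2 + (1/h) * a * w.im + (1/(4*h)) * (w^2).re) := by
  rw [eK, Complex.norm_exp]
  congr 1
  have h1 : -(1 / (4 * (h:ℂ))) = ((-(1/(4*h)) : ℝ) : ℂ) := by push_cast; ring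
  rw [h1, Complex.re_ofReal_mul, ← Complex.ofReal_pow]
  simp only [Complex.add_re, Complex.sub_re, Complex.mul_re, Complex.mul_im, Complex.I_re,
    Complex.I_im, Complex.ofReal_re, Complex.ofReal_im, Complex.re_ofNat, Complex.im_ofNat]
  ring

lemma norm_eK_le (h : ℝ) (hh : 0 < h) (a : ℝ) (R : ℝ) (w : ℂ) (hw : ‖w‖ ≤ R) :
    ‖eK h a w‖ ≤ Real.exp (-(1/(2*h)) * a^2 + (R/h) * |a| + R^2/(4*h)) := by
  rw [norm_eK]
  apply Real.exp_le_exp.2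
  have hb : a * w.im ≤ |a| * R := by
    calc a * w.im ≤ |a * w.im| := le_abs_self _
      _ = |a| * |w.im| := abs_mul _ _
      _ ≤ |a| * R := mul_le_mul_of_nonneg_left
          (le_trans (Complex.abs_im_le_norm w) hw) (abs_nonneg a)
  have h1 : (1/h) * a * w.im ≤ (R/h) * |a| := by
    have h0 : (1/h) * (a * w.im) ≤ (1/h) * (|a| * R) :=
      mul_le_mul_of_nonneg_left hb (le_of_lt (one_div_pos.2 hh))
    calc (1/h) * a * w.im = (1/h) * (a * w.im) := by ring
      _ ≤ (1/h) * (|a| * R) := h0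
      _ = (R/h) * |a| := by ring
  have h2 : (1/(4*h)) * (w^2).re ≤ R^2/(4*h) := by
    have : (w^2).re ≤ R^2 := by
      calc (w^2).re ≤ |(w^2).re| := le_abs_self _
        _ ≤ ‖w^2‖ := Complex.abs_re_le_norm _
        _ = ‖w‖^2 := by rw [norm_pow]
        _ ≤ R^2 := by
            have := norm_nonneg w
            gcongr
    calc (1/(4*h)) * (w^2).re ≤ (1/(4*h)) * R^2 :=
          mul_le_mul_of_nonneg_left this (by positivity)
      _ = R^2/(4*h) := by ring
  linarith

lemma integrable_gauss1 {a : ℝ} (ha : 0 < a) (b c : ℝ) :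
    Integrable (fun x : ℝ => Real.exp (-a*x^2 + b*|x| + c)) := by
  have hi : Integrable (fun x : ℝ => Real.exp (b^2/(2*a) + c) * Real.exp (-(a/2)*x^2)) :=
    (integrable_exp_neg_mul_sq (by positivity)).const_mul _
  apply hi.mono'
  · apply Continuous.aestronglyMeasurable
    fun_prop
  · filter_upwards with x
    rw [Real.norm_eq_abs, _root_.abs_of_nonneg (Real.exp_nonneg _), ← Real.exp_add]
    apply Real.exp_le_exp.2
    have key : b*|x| - (a/2)*x^2 ≤ b^2/(2*a) := by
      rw [le_div_iff₀ (by positivity : (0:ℝ) < 2*a),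
        show x^2 = |x|^2 from (_root_.sq_abs x).symm]
      nlinarith [sq_nonneg (a*|x| - b)]
    linarith

lemma integrable_gaussPi (n : ℕ) {a : ℝ} (ha : 0 < a) (b c : ℝ) :
    Integrable (fun q : Fin n → ℝ => ∏ j, Real.exp (-a*(q j)^2 + b*|q j| + c)) :=
  Integrable.fintype_prod (f := fun _ x => Real.exp (-a*x^2 + b*|x| + c))
    (fun _ => integrable_gauss1 ha b c)

lemma norm_bKer_le {n : ℕ} {h : ℝ} (hh : 0 < h) (q : Fin n → ℝ) {z : Fin n → ℂ} {R : ℝ}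
    (hz : ∀ j, ‖z j‖ ≤ R) :
    ‖bKer n h q z‖ ≤ ∏ j, Real.exp (-(1/(2*h)) * (q j)^2 + (R/h)*|q j| + R^2/(4*h)) := by
  rw [bKer_prod, norm_prod]
  exact Finset.prod_le_prod (fun _ _ => norm_nonneg _)
    (fun j _ => norm_eK_le h hh (q j) R (z j) (hz j))

lemma continuous_bKer {n : ℕ} {h : ℝ} (z : Fin n → ℂ) :
    Continuous (fun q : Fin n → ℝ => bKer n h q z) := by
  unfold bKer
  fun_prop

lemma integrable_mul_ker {n : ℕ} {h : ℝ} (hh : 0 < h) (z : Fin n → ℂ)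
    {g : (Fin n → ℝ) → ℂ} (hg : Continuous g) {M : ℝ} (hM : ∀ q, ‖g q‖ ≤ M) :
    Integrable (fun q => g q * bKer n h q z) := by
  set R : ℝ := ‖z‖ with hR
  have hz : ∀ j, ‖z j‖ ≤ R := fun j => by
    exact norm_le_pi_norm z j
  have hi := ((integrable_gaussPi n (a := 1/(2*h)) (by positivity) (R/h) (R^2/(4*h))).const_mul M)
  apply hi.mono'
  · exact (hg.mul (continuous_bKer z)).aestronglyMeasurable
  · filter_upwards with q
    rw [norm_mul]
    have h1 := norm_bKer_le hh q hz
    have h2 := hM q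
    calc ‖g q‖ * ‖bKer n h q z‖
        ≤ M * ∏ j, Real.exp (-(1/(2*h)) * (q j)^2 + (R/h)*|q j| + R^2/(4*h)) :=
          mul_le_mul h2 h1 (norm_nonneg _) (le_trans (norm_nonneg _) h2)
      _ = _ := rfl

lemma comp_update {α β γ : Type*} [DecidableEq α] (F : α → β → γ) (f : α → β) (k : α) (b : β) :
    (fun j => F j (Function.update f k b j)) = Function.update (fun j => F j (f j)) k (F k b) := by
  funext j
  rcases eq_or_ne j k with rfl | hj
  · simp
  · simp [Function.update_of_ne hj]

lemma sum_comp_update {α β γ : Type*} [DecidableEq α] [Fintype α] [AddCommMonoid γ]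
    (F : α → β → γ) (f : α → β) (k : α) (b : β) :
    ∑ j, F j (Function.update f k b j) = F k b + ∑ j ∈ univ \ {k}, F j (f j) := by
  have h1 : ∑ j, F j (Function.update f k b j)
      = ∑ j, Function.update (fun j => F j (f j)) k (F k b) j :=
    Finset.sum_congr rfl (fun j _ => congrFun (comp_update F f k b) j)
  rw [h1]
  exact Finset.sum_update_of_mem (mem_univ k) (fun j => F j (f j)) (F k b)

lemma bKer_update_right {n : ℕ} {h : ℝ} (q : Fin n → ℝ) (z : Fin n → ℂ) (k : Fin n) (w : ℂ) :
    bKer n h q (Function.update z k w) =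
      Complex.exp (-(1 / (4 * (h : ℂ))) *
        (4 * Complex.I * (((q k : ℂ) * w) + ∑ j ∈ univ \ {k}, (q j : ℂ) * z j)
          + 2 * (∑ j, ((q j : ℂ))^2) - (w^2 + ∑ j ∈ univ \ {k}, (z j)^2))) := by
  rw [bKer, sum_comp_update (fun j y => (q j : ℂ) * y) z k w,
    sum_comp_update (fun _ y => y^2) z k w]

lemma bKer_update_left {n : ℕ} {h : ℝ} (q : Fin n → ℝ) (z : Fin n → ℂ) (k : Fin n) (s : ℝ) :
    bKer n h (Function.update q k s) z =
      Complex.exp (-(1 / (4 * (h : ℂ))) *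
        (4 * Complex.I * (((s : ℂ) * z k) + ∑ j ∈ univ \ {k}, (q j : ℂ) * z j)
          + 2 * ((s:ℂ)^2 + ∑ j ∈ univ \ {k}, ((q j : ℂ))^2) - ∑ j, (z j)^2)) := by
  rw [bKer, sum_comp_update (fun j y => ((y : ℝ) : ℂ) * z j) q k s,
    sum_comp_update (fun _ y => ((y : ℝ) : ℂ)^2) q k s]

lemma hasDerivAt_bKer_right {n : ℕ} {h : ℝ} (q : Fin n → ℝ) (z : Fin n → ℂ) (k : Fin n) (w : ℂ) :
    HasDerivAt (fun w => bKer n h q (Function.update z k w))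
      (-(1 / (4 * (h : ℂ))) * (4 * Complex.I * (q k : ℂ) - 2 * w)
        * bKer n h q (Function.update z k w)) w := by
  have hrw : (fun w => bKer n h q (Function.update z k w)) = fun w =>
      Complex.exp (-(1 / (4 * (h : ℂ))) *
        (4 * Complex.I * (((q k : ℂ) * w) + ∑ j ∈ univ \ {k}, (q j : ℂ) * z j)
          + 2 * (∑ j, ((q j : ℂ))^2) - (w^2 + ∑ j ∈ univ \ {k}, (z j)^2))) :=
    funext fun w => bKer_update_right q z k w
  rw [hrw]
  have h1 : HasDerivAt (fun w : ℂ => (q k : ℂ) * w + ∑ j ∈ univ \ {k}, (q j : ℂ) * z j)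
      ((q k : ℂ)) w := by
    simpa using ((hasDerivAt_id w).const_mul ((q k : ℂ))).add_const
      (∑ j ∈ univ \ {k}, (q j : ℂ) * z j)
  have h2 : HasDerivAt (fun w : ℂ => w^2 + ∑ j ∈ univ \ {k}, (z j)^2) (2 * w) w := by
    simpa using (hasDerivAt_pow 2 w).add_const (∑ j ∈ univ \ {k}, (z j)^2)
  have h3 : HasDerivAt (fun w : ℂ =>
      4 * Complex.I * (((q k : ℂ) * w) + ∑ j ∈ univ \ {k}, (q j : ℂ) * z j)
        + 2 * (∑ j, ((q j : ℂ))^2) - (w^2 + ∑ j ∈ univ \ {k}, (z j)^2))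
      (4 * Complex.I * (q k : ℂ) - 2 * w) w :=
    (((h1.const_mul (4 * Complex.I)).add_const (2 * (∑ j, ((q j : ℂ))^2))).sub h2)
  have h4 := (h3.const_mul (-(1 / (4 * (h : ℂ))))).cexp
  rw [bKer_update_right q z k w]
  refine h4.congr_deriv ?_
  ring

lemma hasDerivAt_bKer_left {n : ℕ} {h : ℝ} (q : Fin n → ℝ) (z : Fin n → ℂ) (k : Fin n) (s : ℝ) :
    HasDerivAt (fun s : ℝ => bKer n h (Function.update q k s) z)
      (-(1 / (4 * (h : ℂ))) * (4 * Complex.I * z k + 4 * (s : ℂ))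
        * bKer n h (Function.update q k s) z) s := by
  have hrw : (fun s : ℝ => bKer n h (Function.update q k s) z) = fun s : ℝ =>
      Complex.exp (-(1 / (4 * (h : ℂ))) *
        (4 * Complex.I * (((s : ℂ) * z k) + ∑ j ∈ univ \ {k}, (q j : ℂ) * z j)
          + 2 * ((s:ℂ)^2 + ∑ j ∈ univ \ {k}, ((q j : ℂ))^2) - ∑ j, (z j)^2)) :=
    funext fun s => bKer_update_left q z k s
  rw [hrw]
  have hre : HasDerivAt (fun s : ℝ => (s : ℂ)) 1 s := by
    simpa using (hasDerivAt_id s).ofReal_comp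
  have h1 : HasDerivAt (fun s : ℝ => (s : ℂ) * z k + ∑ j ∈ univ \ {k}, (q j : ℂ) * z j)
      (z k) s := by simpa using (hre.mul_const (z k)).add_const (∑ j ∈ univ \ {k}, (q j : ℂ) * z j)
  have h2 : HasDerivAt (fun s : ℝ => (s:ℂ)^2 + ∑ j ∈ univ \ {k}, ((q j : ℂ))^2)
      ((s:ℂ) + (s:ℂ)) s := by
    have h2' := (hre.fun_mul hre).add_const (∑ j ∈ univ \ {k}, ((q j : ℂ))^2)
    have e : (fun x : ℝ => (x:ℂ)^2 + ∑ j ∈ univ \ {k}, ((q j : ℂ))^2)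
        = fun x : ℝ => (x:ℂ) * (x:ℂ) + ∑ j ∈ univ \ {k}, ((q j : ℂ))^2 := by
      funext x; rw [pow_two]
    rw [e]; exact h2'.congr_deriv (by ring)
  have h3 : HasDerivAt (fun s : ℝ =>
      4 * Complex.I * (((s : ℂ) * z k) + ∑ j ∈ univ \ {k}, (q j : ℂ) * z j)
        + 2 * ((s:ℂ)^2 + ∑ j ∈ univ \ {k}, ((q j : ℂ))^2) - ∑ j, (z j)^2)
      (4 * Complex.I * z k + 2 * ((s:ℂ) + (s:ℂ))) s :=
    (((h1.const_mul (4 * Complex.I)).add (h2.const_mul 2)).sub_const _)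
  have h4 := (h3.const_mul (-(1 / (4 * (h : ℂ))))).cexp
  rw [bKer_update_left q z k s]
  convert h4 using 1
  ring

/-! ### Schwartz function bounds -/

lemma schwartz_bound {n : ℕ} (ψ : SchwartzMap (Fin n → ℝ) ℂ) :
    ∃ M : ℝ, ∀ q, ‖ψ q‖ ≤ M := by
  obtain ⟨C, -, hC⟩ := ψ.decay 0 0
  exact ⟨C, fun q => by simpa [norm_iteratedFDeriv_zero] using hC q⟩

lemma schwartz_mul_bound {n : ℕ} (ψ : SchwartzMap (Fin n → ℝ) ℂ) (k : Fin n) :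
    ∃ M : ℝ, ∀ q, ‖(q k : ℂ) * ψ q‖ ≤ M := by
  obtain ⟨C, -, hC⟩ := ψ.decay 1 0
  refine ⟨C, fun q => ?_⟩
  have h1 := hC q
  rw [pow_one, norm_iteratedFDeriv_zero] at h1
  rw [norm_mul, Complex.norm_real, Real.norm_eq_abs]
  calc |q k| * ‖ψ q‖ ≤ ‖q‖ * ‖ψ q‖ := by
        apply mul_le_mul_of_nonneg_right _ (norm_nonneg _)
        rw [show |q k| = ‖q k‖ from rfl]
        exact norm_le_pi_norm q k
    _ ≤ C := h1

lemma schwartz_fderiv_bound {n : ℕ} (ψ : SchwartzMap (Fin n → ℝ) ℂ) (v : Fin n → ℝ) :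
    ∃ M : ℝ, ∀ q, ‖fderiv ℝ (⇑ψ) q v‖ ≤ M := by
  obtain ⟨C, -, hC⟩ := ψ.decay 0 1
  refine ⟨C * ‖v‖, fun q => ?_⟩
  have h1 := hC q
  rw [pow_zero, one_mul] at h1
  have h2 : ‖fderiv ℝ (⇑ψ) q‖ ≤ C := by
    have e : ‖fderiv ℝ (⇑ψ) q‖ = ‖iteratedFDeriv ℝ 1 (⇑ψ) q‖ := by
      rw [← norm_iteratedFDeriv_fderiv (n := 0), norm_iteratedFDeriv_zero]
    rw [e]; exact h1
  calc ‖fderiv ℝ (⇑ψ) q v‖ ≤ ‖fderiv ℝ (⇑ψ) q‖ * ‖v‖ := (fderiv ℝ (⇑ψ) q).le_opNorm v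
    _ ≤ C * ‖v‖ := mul_le_mul_of_nonneg_right h2 (norm_nonneg v)

lemma continuous_fderiv_apply {n : ℕ} (ψ : SchwartzMap (Fin n → ℝ) ℂ) (v : Fin n → ℝ) :
    Continuous (fun q => fderiv ℝ (⇑ψ) q v) :=
  ((ψ.smooth 1).continuous_fderiv (by simp)).clm_apply continuous_const

/-! ### Integrability of concrete integrands -/

lemma integrable_psi_ker {n : ℕ} {h : ℝ} (hh : 0 < h) (ψ : SchwartzMap (Fin n → ℝ) ℂ)
    (z : Fin n → ℂ) : Integrable (fun q => ψ q * bKer n h q z) := by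
  obtain ⟨M, hM⟩ := schwartz_bound ψ
  exact integrable_mul_ker hh z ψ.continuous hM

lemma integrable_coord_psi_ker {n : ℕ} {h : ℝ} (hh : 0 < h) (ψ : SchwartzMap (Fin n → ℝ) ℂ)
    (z : Fin n → ℂ) (k : Fin n) :
    Integrable (fun q => (q k : ℂ) * ψ q * bKer n h q z) := by
  obtain ⟨M, hM⟩ := schwartz_mul_bound ψ k
  exact integrable_mul_ker hh z
    ((Complex.continuous_ofReal.comp (continuous_apply k)).mul ψ.continuous) hM

lemma integrable_fderiv_ker {n : ℕ} {h : ℝ} (hh : 0 < h) (ψ : SchwartzMap (Fin n → ℝ) ℂ)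
    (z : Fin n → ℂ) (v : Fin n → ℝ) :
    Integrable (fun q => fderiv ℝ (⇑ψ) q v * bKer n h q z) := by
  obtain ⟨M, hM⟩ := schwartz_fderiv_bound ψ v
  exact integrable_mul_ker hh z (continuous_fderiv_apply ψ v) hM

/-! ### Integration by parts -/

lemma lemA {n : ℕ} {h : ℝ} (hh : 0 < h) (ψ : SchwartzMap (Fin n → ℝ) ℂ)
    (z : Fin n → ℂ) (k : Fin n) :
    ∫ q, fderiv ℝ (⇑ψ) q (Pi.single k 1) * bKer n h q z
      = (1/(h:ℂ)) * (Complex.I * z k * ∫ q, ψ q * bKer n h q z)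
        + (1/(h:ℂ)) * ∫ q, (q k : ℂ) * ψ q * bKer n h q z := by
  have hP := integrable_psi_ker hh ψ z
  have hQ := integrable_coord_psi_ker hh ψ z k
  have hD := integrable_fderiv_ker hh ψ z (Pi.single k 1)
  have hne : (h : ℂ) ≠ 0 := Complex.ofReal_ne_zero.2 hh.ne'
  -- integration by parts
  have h1 : Integrable (fun q =>
      (ContinuousLinearMap.mul ℝ ℂ)
        (-(1/(4*(h:ℂ))) * (4*Complex.I*z k + 4*(q k : ℂ)) * bKer n h q z) (ψ q)) := by
    apply Integrable.congr
      ((hP.const_mul (-(1/(4*(h:ℂ))) * (4*Complex.I*z k))).add (hQ.const_mul (-(1/(4*(h:ℂ))) * 4)))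
    filter_upwards with q
    simp only [ContinuousLinearMap.mul_apply', Pi.add_apply]
    ring
  have h2 : Integrable (fun q =>
      (ContinuousLinearMap.mul ℝ ℂ) (bKer n h q z) (fderiv ℝ (⇑ψ) q (Pi.single k 1))) := by
    apply hD.congr
    filter_upwards with q
    simp only [ContinuousLinearMap.mul_apply', Pi.add_apply]
    ring
  have h3 : Integrable (fun q =>
      (ContinuousLinearMap.mul ℝ ℂ) (bKer n h q z) (ψ q)) := by
    apply hP.congr
    filter_upwards with q
    simp only [ContinuousLinearMap.mul_apply', Pi.add_apply]
    ring
  have h4 : ∀ q : Fin n → ℝ, HasLineDerivAt ℝ (fun q => bKer n h q z)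
      (-(1/(4*(h:ℂ))) * (4*Complex.I*z k + 4*(q k : ℂ)) * bKer n h q z) q (Pi.single k 1) := by
    intro q
    have hup : ∀ t : ℝ, q + t • (Pi.single k 1 : Fin n → ℝ) = Function.update q k (q k + t) := by
      intro t; funext j
      rcases eq_or_ne j k with rfl | hj
      · simp
      · simp [Function.update_of_ne hj, Pi.single_eq_of_ne hj]
    have hG := hasDerivAt_bKer_left (h := h) q z k (q k)
    rw [Function.update_eq_self] at hG
    have hshift : HasDerivAt (fun t : ℝ => q k + t) 1 0 := by
      simpa using (hasDerivAt_id (0:ℝ)).const_add (q k)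
    have hG' : HasDerivAt (fun s : ℝ => bKer n h (Function.update q k s) z)
        (-(1 / (4 * (h : ℂ))) * (4 * Complex.I * z k + 4 * ((q k : ℝ) : ℂ))
          * bKer n h q z) (q k + 0) := by
      simpa using hG
    have hcomp := hG'.comp_const_add (q k) 0
    unfold HasLineDerivAt
    simp only [hup]
    simpa using hcomp
  have h5 : ∀ q : Fin n → ℝ, HasLineDerivAt ℝ (⇑ψ)
      (fderiv ℝ (⇑ψ) q (Pi.single k 1)) q (Pi.single k 1) := fun q =>
    (((ψ.smooth 1).differentiable (by simp)) q).hasFDerivAt.hasLineDerivAt _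
  have key := integral_bilinear_hasLineDerivAt_right_eq_neg_left_of_integrable
    (μ := (volume : Measure (Fin n → ℝ))) (B := ContinuousLinearMap.mul ℝ ℂ)
    (f := fun q => bKer n h q z)
    (f' := fun q => -(1/(4*(h:ℂ))) * (4*Complex.I*z k + 4*(q k : ℂ)) * bKer n h q z)
    (g := ⇑ψ) (g' := fun q => fderiv ℝ (⇑ψ) q (Pi.single k 1))
    (v := Pi.single k 1) h1 h2 h3 (fun x _ => h4 x) (fun x _ => h5 x)
  simp only [ContinuousLinearMap.mul_apply'] at key
  have e1 : (fun q => fderiv ℝ (⇑ψ) q (Pi.single k 1) * bKer n h q z)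
      = fun q => bKer n h q z * fderiv ℝ (⇑ψ) q (Pi.single k 1) := by
    funext q; ring
  rw [e1, key]
  have e2 : (fun q => -(1/(4*(h:ℂ))) * (4*Complex.I*z k + 4*(q k : ℂ)) * bKer n h q z * ψ q)
      = fun q => (-(1/(4*(h:ℂ))) * (4*Complex.I*z k)) * (ψ q * bKer n h q z)
          + (-(1/(4*(h:ℂ))) * 4) * ((q k : ℂ) * ψ q * bKer n h q z) := by
    funext q; ring
  rw [e2, integral_add (hP.const_mul _) (hQ.const_mul _), integral_const_mul, integral_const_mul]
  field_simp
  ring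

/-! ### Differentiation under the integral sign -/

lemma lemB {n : ℕ} {h : ℝ} (hh : 0 < h) (ψ : SchwartzMap (Fin n → ℝ) ℂ)
    (z : Fin n → ℂ) (k : Fin n) :
    cpder k (barg n h ψ) z
      = (((Real.pi * h) ^ (-(n : ℝ) / 4) : ℝ) : ℂ) *
        ((-(1/(4*(h:ℂ))) * 4 * Complex.I) * (∫ q, (q k : ℂ) * ψ q * bKer n h q z)
          + ((1/(4*(h:ℂ))) * 2 * z k) * (∫ q, ψ q * bKer n h q z)) := by
  obtain ⟨M, hM⟩ := schwartz_bound ψ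
  have hM0 : 0 ≤ M := le_trans (norm_nonneg _) (hM 0)
  set R : ℝ := ‖z‖ + 1 with hRdef
  have hR1 : (1:ℝ) ≤ R := by
    have := norm_nonneg z; simp only [hRdef]; linarith
  have hR0 : (0:ℝ) < R := lt_of_lt_of_le one_pos hR1
  -- uniform bound on coordinates of updated z
  have hzcoord : ∀ w ∈ Metric.ball (z k) 1, ∀ j, ‖Function.update z k w j‖ ≤ R := by
    intro w hw j
    rcases eq_or_ne j k with rfl | hj
    · rw [Function.update_self]
      have hd : ‖w - z j‖ < 1 := by
        rw [← Complex.dist_eq]; exact Metric.mem_ball.1 hw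
      calc ‖w‖ = ‖z j + (w - z j)‖ := by ring_nf
        _ ≤ ‖z j‖ + ‖w - z j‖ := norm_add_le _ _
        _ ≤ ‖z‖ + 1 := by
            have h1 : ‖z j‖ ≤ ‖z‖ := by
              exact norm_le_pi_norm z j
            linarith
    · rw [Function.update_of_ne hj]
      have h1 : ‖z j‖ ≤ ‖z‖ := by
        exact norm_le_pi_norm z j
      simp only [hRdef]; linarith
  -- the parametrized family and its derivative
  set F : ℂ → (Fin n → ℝ) → ℂ := fun w q => ψ q * bKer n h q (Function.update z k w) with hF
  set F' : ℂ → (Fin n → ℝ) → ℂ := fun w q =>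
    ψ q * (-(1 / (4 * (h : ℂ))) * (4 * Complex.I * (q k : ℂ) - 2 * w)
      * bKer n h q (Function.update z k w)) with hF'
  set bound : (Fin n → ℝ) → ℝ := fun q => (M * ((4 + 2*R)/(4*h))) *
    ∏ j, Real.exp (-(1/(2*h)) * (q j)^2 + (R/h + 1)*|q j| + R^2/(4*h)) with hbound
  have hFmeas : ∀ᶠ w in nhds (z k), AEStronglyMeasurable (F w) volume := by
    filter_upwards with w
    exact (ψ.continuous.mul (continuous_bKer _)).aestronglyMeasurable
  have hFint : Integrable (F (z k)) volume := integrable_psi_ker hh ψ _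
  have hF'meas : AEStronglyMeasurable (F' (z k)) volume := by
    apply Continuous.aestronglyMeasurable
    simp only [hF']
    apply Continuous.mul ψ.continuous
    apply Continuous.mul _ (continuous_bKer _)
    fun_prop
  have h_bound : ∀ᵐ q ∂(volume : Measure (Fin n → ℝ)),
      ∀ w ∈ Metric.ball (z k) 1, ‖F' w q‖ ≤ bound q := by
    filter_upwards with q w hw
    have hker := norm_bKer_le hh q (hzcoord w hw)
    have habsw : ‖w‖ ≤ R := by
      have := hzcoord w hw k
      rwa [Function.update_self] at this
    have hc4 : ‖(-(1 / (4 * (h : ℂ))))‖ = 1/(4*h) := by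
      have e : -(1 / (4 * (h:ℂ))) = ((-(1/(4*h)) : ℝ) : ℂ) := by push_cast; ring
      rw [e, Complex.norm_real, Real.norm_eq_abs, abs_neg, abs_of_pos (by positivity)]
    have hfac : ‖-(1 / (4 * (h : ℂ))) * (4 * Complex.I * (q k : ℂ) - 2 * w)‖
        ≤ (4*|q k| + 2*R)/(4*h) := by
      rw [norm_mul, hc4]
      have h1 : ‖4 * Complex.I * (q k : ℂ) - 2 * w‖ ≤ 4*|q k| + 2*R := by
        calc ‖4 * Complex.I * (q k : ℂ) - 2 * w‖
            ≤ ‖4 * Complex.I * (q k : ℂ)‖ + ‖2 * w‖ := norm_sub_le _ _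
          _ = 4 * |q k| + 2 * ‖w‖ := by
              simp [norm_mul, Complex.norm_I, Complex.norm_real]
          _ ≤ 4*|q k| + 2*R := by linarith
      calc (1/(4*h)) * ‖4 * Complex.I * (q k : ℂ) - 2 * w‖
          ≤ (1/(4*h)) * (4*|q k| + 2*R) := by
            apply mul_le_mul_of_nonneg_left h1 (by positivity)
        _ = (4*|q k| + 2*R)/(4*h) := by ring
    have key2 : (4*|q k| + 2*R)/(4*h) *
        (∏ j, Real.exp (-(1/(2*h)) * (q j)^2 + (R/h)*|q j| + R^2/(4*h)))
        ≤ (4 + 2*R)/(4*h) *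
          (∏ j, Real.exp (-(1/(2*h)) * (q j)^2 + (R/h + 1)*|q j| + R^2/(4*h))) := by
      have e1 : ∏ j, Real.exp (-(1/(2*h)) * (q j)^2 + (R/h + 1)*|q j| + R^2/(4*h))
          = (∏ j, Real.exp |q j|) *
            ∏ j, Real.exp (-(1/(2*h)) * (q j)^2 + (R/h)*|q j| + R^2/(4*h)) := by
        rw [← Finset.prod_mul_distrib]
        apply Finset.prod_congr rfl
        intro j _
        rw [← Real.exp_add]
        congr 1
        ring
      have hsum : ∏ j, Real.exp |q j| = Real.exp (∑ j, |q j|) := (Real.exp_sum _ _).symm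
      have hexpk : |q k| ≤ ∏ j, Real.exp |q j| := by
        rw [hsum]
        calc |q k| ≤ Real.exp |q k| := by linarith [Real.add_one_le_exp |q k|]
          _ ≤ Real.exp (∑ j, |q j|) := Real.exp_le_exp.2
              (Finset.single_le_sum (fun j _ => abs_nonneg (q j)) (Finset.mem_univ k))
      have hone : (1:ℝ) ≤ ∏ j, Real.exp |q j| := by
        rw [hsum]
        exact Real.one_le_exp (Finset.sum_nonneg fun j _ => abs_nonneg (q j))
      have e2 : 4*|q k| + 2*R ≤ (4 + 2*R) * ∏ j, Real.exp |q j| := by nlinarith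
      rw [e1]
      have hprodpos : (0:ℝ) ≤ ∏ j, Real.exp (-(1/(2*h)) * (q j)^2 + (R/h)*|q j| + R^2/(4*h)) :=
        Finset.prod_nonneg fun _ _ => Real.exp_nonneg _
      calc (4*|q k| + 2*R)/(4*h) *
          (∏ j, Real.exp (-(1/(2*h)) * (q j)^2 + (R/h)*|q j| + R^2/(4*h)))
          ≤ ((4 + 2*R) * ∏ j, Real.exp |q j|)/(4*h) *
            (∏ j, Real.exp (-(1/(2*h)) * (q j)^2 + (R/h)*|q j| + R^2/(4*h))) := by
            apply mul_le_mul_of_nonneg_right _ hprodpos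
            rw [div_eq_mul_inv, div_eq_mul_inv]
            exact mul_le_mul_of_nonneg_right e2 (by positivity)
        _ = (4 + 2*R)/(4*h) * ((∏ j, Real.exp |q j|) *
            ∏ j, Real.exp (-(1/(2*h)) * (q j)^2 + (R/h)*|q j| + R^2/(4*h))) := by ring
    simp only [hF', hbound]
    rw [norm_mul, norm_mul]
    calc ‖ψ q‖ * (‖-(1 / (4 * (h : ℂ))) * (4 * Complex.I * (q k : ℂ) - 2 * w)‖
          * ‖bKer n h q (Function.update z k w)‖)
        ≤ M * ((4*|q k| + 2*R)/(4*h) *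
            ∏ j, Real.exp (-(1/(2*h)) * (q j)^2 + (R/h)*|q j| + R^2/(4*h))) := by
          apply mul_le_mul (hM q) _ (by positivity) hM0
          apply mul_le_mul hfac hker (norm_nonneg _) (by positivity)
      _ ≤ M * ((4 + 2*R)/(4*h) *
            ∏ j, Real.exp (-(1/(2*h)) * (q j)^2 + (R/h + 1)*|q j| + R^2/(4*h))) := by
          apply mul_le_mul_of_nonneg_left key2 hM0
      _ = M * ((4 + 2*R)/(4*h)) *
            ∏ j, Real.exp (-(1/(2*h)) * (q j)^2 + (R/h + 1)*|q j| + R^2/(4*h)) := by ring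
  have hbound_int : Integrable bound volume :=
    (integrable_gaussPi n (a := 1/(2*h)) (by positivity) (R/h + 1) (R^2/(4*h))).const_mul _
  have h_diff : ∀ᵐ q ∂(volume : Measure (Fin n → ℝ)),
      ∀ w ∈ Metric.ball (z k) 1, HasDerivAt (fun w => F w q) (F' w q) w := by
    filter_upwards with q w _
    exact (hasDerivAt_bKer_right q z k w).const_mul (ψ q)
  obtain ⟨-, hD⟩ := hasDerivAt_integral_of_dominated_loc_of_deriv_le (Metric.ball_mem_nhds _ one_pos)
    hFmeas hFint hF'meas h_bound hbound_int h_diff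
  -- now identify the derivative
  have hDz : HasDerivAt (fun w => ∫ q, F w q) (∫ q, ψ q *
      (-(1 / (4 * (h : ℂ))) * (4 * Complex.I * (q k : ℂ) - 2 * z k) * bKer n h q z)) (z k) := by
    refine hD.congr_deriv ?_
    simp only [hF', Function.update_eq_self]
  have hsplit : (fun q => ψ q *
      (-(1 / (4 * (h : ℂ))) * (4 * Complex.I * (q k : ℂ) - 2 * z k) * bKer n h q z))
      = fun q => (-(1/(4*(h:ℂ))) * 4 * Complex.I) * ((q k : ℂ) * ψ q * bKer n h q z)
          + ((1/(4*(h:ℂ))) * 2 * z k) * (ψ q * bKer n h q z) := by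
    funext q; ring
  have hDz2 : HasDerivAt (fun w => barg n h (⇑ψ) (Function.update z k w))
      ((((Real.pi * h) ^ (-(n : ℝ) / 4) : ℝ) : ℂ) *
        ((-(1/(4*(h:ℂ))) * 4 * Complex.I) * (∫ q, (q k : ℂ) * ψ q * bKer n h q z)
          + ((1/(4*(h:ℂ))) * 2 * z k) * (∫ q, ψ q * bKer n h q z))) (z k) := by
    have := hDz.const_mul ((((Real.pi * h) ^ (-(n : ℝ) / 4) : ℝ) : ℂ))
    refine this.congr_deriv ?_
    rw [hsplit, integral_add ((integrable_coord_psi_ker hh ψ z k).const_mul _)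
      ((integrable_psi_ker hh ψ z).const_mul _), integral_const_mul, integral_const_mul]
  exact hDz2.deriv

/-- `B ∘ D_j = (i/2)(μ_j + δ_j) ∘ B` for the Bargmann transform with `ℏ = 1/|t|`. -/
theorem statement8 (r : ℕ) (hr : 1 ≤ r) (t : ℂ) (ht : t ≠ 0)
    (ψ : SchwartzMap (Fin (r+r) → ℝ) ℂ) (j : Fin r) :
    ∀ z : Fin (r+r) → ℂ,
      barg (r+r) (‖t‖)⁻¹ (Dop r t j ψ) z
        = (Complex.I / 2) *
          (muop r j (barg (r+r) (‖t‖)⁻¹ ψ) z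
            + deltaop r t j (barg (r+r) (‖t‖)⁻¹ ψ) z) := by
  intro z
  have habs : (0:ℝ) < ‖t‖ := norm_pos_iff.mpr ht
  set h : ℝ := (‖t‖)⁻¹ with hhdef
  have hh : 0 < h := inv_pos.2 habs
  have hT : ((‖t‖ : ℝ) : ℂ) ≠ 0 := Complex.ofReal_ne_zero.2 habs.ne'
  have hcoe : (h : ℂ) = ((‖t‖ : ℝ) : ℂ)⁻¹ := by
    rw [hhdef, Complex.ofReal_inv]
  set k1 := Fin.castAdd r j with hk1
  set k2 := Fin.natAdd r j with hk2
  have hsplit : (fun q => Dop r t j (⇑ψ) q * bKer (r+r) h q z) = fun q =>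
      (1 / ((‖t‖ : ℝ) : ℂ)) *
        (fderiv ℝ (⇑ψ) q (Pi.single k1 1) * bKer (r+r) h q z)
      + ((1 / ((‖t‖ : ℝ) : ℂ)) * Complex.I) *
        (fderiv ℝ (⇑ψ) q (Pi.single k2 1) * bKer (r+r) h q z) := by
    funext q; simp only [Dop]; ring
  rw [barg, hsplit, integral_add ((integrable_fderiv_ker hh ψ z _).const_mul _)
    ((integrable_fderiv_ker hh ψ z _).const_mul _), integral_const_mul, integral_const_mul,
    lemA hh ψ z k1, lemA hh ψ z k2]
  simp only [muop, deltaop]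
  rw [lemB hh ψ z k1, lemB hh ψ z k2, barg]
  set C := (((Real.pi * h) ^ (-((r+r : ℕ) : ℝ) / 4) : ℝ) : ℂ) with hC
  set P := ∫ q, ψ q * bKer (r+r) h q z with hP
  set Q1 := ∫ q, ((q k1 : ℝ) : ℂ) * ψ q * bKer (r+r) h q z with hQ1
  set Q2 := ∫ q, ((q k2 : ℝ) : ℂ) * ψ q * bKer (r+r) h q z with hQ2
  have hzk2 : z (Fin.addNat j r) = z k2 := by
    congr 1
    rw [hk2]
    ext
    simp only [Fin.addNat, Fin.natAdd]
    omega
  rw [hcoe]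
  field_simp
  rw [← hk1, ← hk2]
  linear_combination (8 * C * (Q1 + Complex.I * Q2)) *
    Complex.I_sq
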